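/- Let A be a finite alphabet and n ≥ 1 an integer. If P ⊆ A^ℕ is a path set, then the n-interleaving P^{(*n)} is also a path set. Moreover, if P has a right-resolving presentation (V, v₀, E) with exactly k vertices and m labeled edges, then P^{(*n)} has a right-resolving presentation with exactly k^n vertices and m·k^{n−1} labeled edges. -/

import Mathlib

open MeasureTheory ENNReal

noncomputable section

/-- The path set of a pointed labeled graph: sequences of edge labels of infinite
walks starting at `v0`. -/
def PathSetOf {A V : Type*} (E : Set (V × A × V)) (v0 : V) : Set (ℕ → A) :=
  {x | ∃ v : ℕ → V, v 0 = v0 ∧ ∀ i, (v i, x i, v (i + 1)) ∈ E}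

/-- `P` is a path set if it is presented by some pointed labeled graph with a finite
vertex set. -/
def IsPathSet {A : Type*} (P : Set (ℕ → A)) : Prop :=
  ∃ (V : Type) (_ : Fintype V) (v0 : V) (E : Set (V × A × V)), P = PathSetOf E v0

/-- A labeled graph is right-resolving if each vertex has at most one outgoing edge
with any given label. -/
def RightResolving {A V : Type*} (E : Set (V × A × V)) : Prop :=
  ∀ u a w w', (u, a, w) ∈ E → (u, a, w') ∈ E → w = w'

/-- The n-interleaving of a set of sequences. -/
def Interleave {A : Type*} (n : ℕ) (X : Set (ℕ → A)) : Set (ℕ → A) :=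
  {x | ∀ j < n, (fun i => x (j + i * n)) ∈ X}

namespace IAux

variable {A V : Type*}

def InterF (n' : ℕ) (E : Set (V × A × V)) :
    Set ((Fin (n' + 1) → V) × A × (Fin (n' + 1) → V)) :=
  {p | (p.1 0, p.2.1, p.2.2 (Fin.last n')) ∈ E ∧
    ∀ r : Fin n', p.2.2 r.castSucc = p.1 r.succ}

lemma shift_iter {n' : ℕ} {E : Set (V × A × V)} {x : ℕ → A} {w : ℕ → Fin (n'+1) → V}
    (hw : ∀ t, (w t, x t, w (t+1)) ∈ InterF n' E) :
    ∀ (c t r : ℕ) (h : r + c ≤ n'),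
      w (t + c) ⟨r, by omega⟩ = w t ⟨r + c, by omega⟩ := by
  intro c
  induction c with
  | zero => intro t r h; rfl
  | succ c ih =>
    intro t r h
    have h2 := (hw (t+c)).2 ⟨r, by omega⟩
    have e1 : w (t + (c+1)) ⟨r, by omega⟩ = w (t+c) ⟨r+1, by omega⟩ := by
      rw [← Nat.add_assoc]; simpa [Fin.castSucc_mk, Fin.succ_mk] using h2
    rw [e1, ih t (r+1) (by omega)]
    exact congrArg (w t) (Fin.ext (by simp; omega))

lemma interF_pathset (n' : ℕ) (E : Set (V × A × V)) (v0 : V) :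
    Interleave (n' + 1) (PathSetOf E v0)
      = PathSetOf (InterF n' E) (fun _ => v0) := by
  ext x
  constructor
  · intro hx
    have h : ∀ j : Fin (n'+1), ∃ v : ℕ → V, v 0 = v0 ∧
        ∀ i, (v i, x (j + i * (n'+1)), v (i+1)) ∈ E := fun j => hx j j.isLt
    choose vv hv0 hvE using h
    refine ⟨fun t r => vv ⟨(t + r) % (n'+1), Nat.mod_lt _ (Nat.succ_pos n')⟩
      ((t + r) / (n'+1)), ?_, ?_⟩
    · funext r
      simp only [Nat.zero_add]
      have h1 : ((r:ℕ)) % (n'+1) = r := Nat.mod_eq_of_lt r.isLt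
      have h2 : ((r:ℕ)) / (n'+1) = 0 := Nat.div_eq_of_lt r.isLt
      simp only [h1, h2, Fin.eta]
      exact hv0 r
    · intro t
      constructor
      · show (vv _ _, x t, vv _ _) ∈ E
        have e0 : t + ((0 : Fin (n'+1)) : ℕ) = t := by simp
        have e1 : t + 1 + ((Fin.last n' : Fin (n'+1)) : ℕ) = t + (n'+1) := by
          simp [Fin.last]; omega
        simp only [e0, e1, Nat.add_mod_right, Nat.add_div_right _ (Nat.succ_pos n')]
        have := hvE ⟨t % (n'+1), Nat.mod_lt _ (Nat.succ_pos n')⟩ (t / (n'+1))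
        simpa [Nat.mod_add_div'] using this
      · intro r
        show vv _ _ = vv _ _
        have e1 : t + 1 + ((r.castSucc : Fin (n'+1)) : ℕ) = t + ((r.succ : Fin (n'+1)) : ℕ) := by
          simp [Fin.val_succ]; omega
        simp only [e1]
  · rintro ⟨w, hw0, hwE⟩
    intro j hj
    refine ⟨fun i => w (j + i * (n'+1)) 0, ?_, ?_⟩
    · calc w (j + 0 * (n'+1)) 0
          = w (0 + j) ⟨0, Nat.succ_pos n'⟩ := by
            rw [show j + 0 * (n'+1) = 0 + j by omega]
            exact congrArg (w (0+j)) (Fin.ext (by simp))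
        _ = w 0 ⟨0 + j, by omega⟩ := shift_iter hwE j 0 0 (by omega)
        _ = v0 := by rw [hw0]
    · intro i
      have hhead := (hwE (j + i * (n'+1))).1
      have htail : w (j + i * (n'+1) + 1 + n') ⟨0, Nat.succ_pos n'⟩
          = w (j + i * (n'+1) + 1) ⟨0 + n', Nat.lt_succ_of_le (Nat.le_of_eq (Nat.zero_add n'))⟩ :=
        shift_iter hwE n' (j + i * (n'+1) + 1) 0 (by omega)
      have h2 : (⟨0, Nat.succ_pos n'⟩ : Fin (n'+1)) = 0 := Fin.ext (by simp)
      have h3 : (⟨0 + n', Nat.lt_succ_of_le (Nat.le_of_eq (Nat.zero_add n'))⟩ : Fin (n'+1)) = Fin.last n' :=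
        Fin.ext (by simp [Fin.last])
      rw [h2, h3] at htail
      have e3 : w (j + (i+1)*(n'+1)) 0 = w (j + i*(n'+1) + 1) (Fin.last n') := by
        rw [show j + (i+1)*(n'+1) = j + i*(n'+1) + 1 + n' by ring, htail]
      show (w (j + i*(n'+1)) 0, x (j + i*(n'+1)), w (j + (i+1)*(n'+1)) 0) ∈ E
      rw [e3]
      exact hhead

lemma interF_rr {n' : ℕ} {E : Set (V × A × V)} (hE : RightResolving E) :
    RightResolving (InterF n' E) := by
  rintro u a w w' ⟨h1, h2⟩ ⟨h1', h2'⟩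
  funext r
  induction r using Fin.lastCases with
  | last => exact hE (u 0) a _ _ h1 h1'
  | cast r => exact (h2 r).trans (h2' r).symm

def interFEquiv (n' : ℕ) (E : Set (V × A × V)) :
    (InterF n' E) ≃ (E × (Fin n' → V)) where
  toFun p := (⟨(p.1.1 0, p.1.2.1, p.1.2.2 (Fin.last n')), p.2.1⟩, fun r => p.1.1 r.succ)
  invFun q := ⟨(Fin.cons q.1.1.1 q.2, q.1.1.2.1, Fin.snoc q.2 q.1.1.2.2), by
    refine ⟨?_, ?_⟩
    · simp only [Fin.cons_zero, Fin.snoc_last]; exact q.1.2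
    · intro r; simp [Fin.snoc_castSucc, Fin.cons_succ]⟩
  left_inv := by
    rintro ⟨⟨u, a, u'⟩, hp⟩
    apply Subtype.ext
    show (Fin.cons (u 0) (fun r => u r.succ), a, Fin.snoc (fun r => u r.succ) (u' (Fin.last n')))
      = (u, a, u')
    have h1 : Fin.cons (u 0) (fun r => u r.succ) = u := Fin.cons_self_tail u
    have h2 : Fin.snoc (fun r => u r.succ) (u' (Fin.last n')) = u' := by
      funext r
      induction r using Fin.lastCases with
      | last => simp
      | cast r => rw [Fin.snoc_castSucc]; exact (hp.2 r).symm
    rw [h1, h2]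
  right_inv := by
    rintro ⟨⟨⟨v, a, z⟩, he⟩, t⟩
    dsimp only
    refine Prod.ext (Subtype.ext ?_) ?_
    · simp
    · funext r; simp

lemma interF_ncard (n' : ℕ) (E : Set (V × A × V)) [Fintype V] :
    (InterF n' E).ncard = E.ncard * (Fintype.card V) ^ n' := by
  have h1 : Nat.card (InterF n' E) = Nat.card (E × (Fin n' → V)) :=
    Nat.card_congr (interFEquiv n' E)
  rw [Nat.card_prod] at h1
  rw [← Nat.card_coe_set_eq, h1, Nat.card_coe_set_eq]
  congr 1
  simp [Nat.card_eq_fintype_card, Fintype.card_fun]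

end IAux


/-- If P is a path set, so is its n-interleaving; moreover from a right-resolving
presentation with k vertices and m edges one gets a right-resolving presentation of
the interleaving with k^n vertices and m·k^{n−1} edges. -/
theorem interleave_isPathSet {A : Type} [Fintype A] (n : ℕ) (hn : 1 ≤ n)
    (P : Set (ℕ → A)) (hP : IsPathSet P) :
    IsPathSet (Interleave n P) ∧
    ∀ (V : Type) (hV : Fintype V) (v0 : V) (E : Set (V × A × V)) (k m : ℕ),
      P = PathSetOf E v0 → RightResolving E →
      @Fintype.card V hV = k → E.ncard = m →
      ∃ (W : Type) (hW : Fintype W) (w0 : W) (F : Set (W × A × W)),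
        Interleave n P = PathSetOf F w0 ∧ RightResolving F ∧
        @Fintype.card W hW = k ^ n ∧ F.ncard = m * k ^ (n - 1) := by
  obtain ⟨n', rfl⟩ : ∃ n', n = n' + 1 := ⟨n - 1, by omega⟩
  constructor
  · obtain ⟨V, hV, v0, E, rfl⟩ := hP
    letI := hV
    exact ⟨(Fin (n'+1) → V), inferInstance, fun _ => v0, IAux.InterF n' E,
      IAux.interF_pathset n' E v0⟩
  · intro V hV v0 E k m hPE hRR hk hm
    letI := hV
    subst hk hm
    refine ⟨(Fin (n'+1) → V), inferInstance, fun _ => v0, IAux.InterF n' E, ?_,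
      IAux.interF_rr hRR, ?_, ?_⟩
    · rw [hPE]; exact IAux.interF_pathset n' E v0
    · rw [Fintype.card_fun, Fintype.card_fin]
    · rw [IAux.interF_ncard]
      simp

end
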